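/- Let q be a Lie algebra over a field of characteristic zero and x ∈ q. Assume that z_q(x) is abelian and q = [q,x] ⊕ z_q(x) (direct sum of subspaces). Then the subspace [q, z_q(x)] spanned by all brackets [y,z] with y ∈ q and z ∈ z_q(x) equals [q,x]. -/
import Mathlib


/-- Let `q` be a Lie algebra over a field of characteristic zero and
`x ∈ q`. Assume `z_q(x)` is abelian and `q = [q,x] ⊕ z_q(x)` as subspaces. Then the
subspace `[q, z_q(x)]` spanned by all brackets `⁅y, z⁆` with `y ∈ q`, `z ∈ z_q(x)`
equals `[q,x]` (the image of `ad x`). -/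
theorem span_brackets_centralizer_eq_range_ad
    {k L : Type*} [Field k] [CharZero k] [LieRing L] [LieAlgebra k L] (x : L)
    (hab : ∀ y z : L, ⁅x, y⁆ = 0 → ⁅x, z⁆ = 0 → ⁅y, z⁆ = 0)
    (hsum : LinearMap.range (LieAlgebra.ad k L x) ⊔ LinearMap.ker (LieAlgebra.ad k L x) = ⊤)
    (hint : LinearMap.range (LieAlgebra.ad k L x) ⊓ LinearMap.ker (LieAlgebra.ad k L x) = ⊥) :
    Submodule.span k {w : L | ∃ y z : L, ⁅x, z⁆ = 0 ∧ ⁅y, z⁆ = w} =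
      LinearMap.range (LieAlgebra.ad k L x) := by
  apply le_antisymm
  · rw [Submodule.span_le]
    rintro w ⟨y, z, hz, rfl⟩
    have hy : y ∈ LinearMap.range (LieAlgebra.ad k L x) ⊔
        LinearMap.ker (LieAlgebra.ad k L x) := hsum ▸ Submodule.mem_top
    obtain ⟨r, hr, c, hc, rfl⟩ := Submodule.mem_sup.mp hy
    obtain ⟨u, rfl⟩ := hr
    have hc' : ⁅x, c⁆ = 0 := hc
    refine ⟨⁅u, z⁆, ?_⟩
    simp only [LieAlgebra.ad_apply, add_lie, hab c z hc' hz, add_zero, lie_lie, hz,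
      lie_zero, sub_zero]
  · rintro _ ⟨y, rfl⟩
    apply Submodule.subset_span
    exact ⟨-y, x, lie_self x, by simp [LieAlgebra.ad_apply]⟩
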